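/- (Covering by good cubes.) Let μ be a Radon measure on ℝ^N, ε > 0 and r_0 > 0. Then for every open set U ⊆ ℝ^N there is a sequence of pairwise disjoint closed cubes {Bx(z_λ, r_λ)}_λ contained in U such that: r_λ ≤ r_0 for all λ; μ(Fr(z_λ, r_λ, ε)) ≤ 16N·2^N·ε·μ(Bx(z_λ, r_λ)) for all λ; and μ(U \ ⋃_λ Bx(z_λ, r_λ)) = 0. -/

import Mathlib

open MeasureTheory

/-- The closed cube of center `x` and half-side `r`. -/
def Bx {N : ℕ} (x : Fin N → ℝ) (r : ℝ) : Set (Fin N → ℝ) :=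
  {y | ∀ i, |x i - y i| ≤ r}

/-- The `ε`-frame of the cube `Bx x r`. -/
def Fr {N : ℕ} (x : Fin N → ℝ) (r ε : ℝ) : Set (Fin N → ℝ) :=
  {y ∈ Bx x r | ∃ i, (1 - ε) * r ≤ |x i - y i|}

open Metric Set
open scoped ENNReal NNReal

section Auxiliary

variable {N : ℕ}

lemma bx_eq (x : Fin N → ℝ) {r : ℝ} (hr : 0 ≤ r) : Bx x r = closedBall x r := by
  ext y
  simp only [Bx, mem_setOf_eq, mem_closedBall, dist_pi_le_iff hr, Real.dist_eq]
  constructor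
  · intro h i; rw [abs_sub_comm]; exact h i
  · intro h i; rw [abs_sub_comm]; exact h i

lemma isClosed_bx (x : Fin N → ℝ) (r : ℝ) : IsClosed (Bx x r) := by
  have : Bx x r = ⋂ i, {y : Fin N → ℝ | |x i - y i| ≤ r} := by
    ext y; simp [Bx]
  rw [this]
  exact isClosed_iInter fun i =>
    isClosed_le ((continuous_const.sub (continuous_apply i)).abs) continuous_const

lemma isClosed_fr (x : Fin N → ℝ) (r ε : ℝ) : IsClosed (Fr x r ε) := by
  have : Fr x r ε = Bx x r ∩ ⋃ i, {y : Fin N → ℝ | (1 - ε) * r ≤ |x i - y i|} := by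
    ext y; simp [Fr]
  rw [this]
  exact (isClosed_bx x r).inter <| isClosed_iUnion_of_finite fun i =>
    isClosed_le continuous_const ((continuous_const.sub (continuous_apply i)).abs)

lemma fr_subset (x : Fin N → ℝ) (r ε : ℝ) : Fr x r ε ⊆ Bx x r := fun _ h => h.1

lemma fr_lower {x y : Fin N → ℝ} {r ε : ℝ} (h : y ∈ Fr x r ε) : (1 - ε) * r ≤ dist y x := by
  obtain ⟨i, hi⟩ := h.2
  calc (1 - ε) * r ≤ |x i - y i| := hi
    _ = dist (y i) (x i) := by rw [Real.dist_eq, abs_sub_comm]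
    _ ≤ dist y x := dist_le_pi_dist y x i

lemma fr_disjoint {x : Fin N → ℝ} {s s' ε : ℝ} (hs' : 0 ≤ s') (h : s' < (1 - ε) * s) :
    Disjoint (Fr x s ε) (Fr x s' ε) := by
  rw [Set.disjoint_left]
  intro y hy hy'
  have h1 : (1 - ε) * s ≤ dist y x := fr_lower hy
  have h2 : dist y x ≤ s' := by
    rw [← mem_closedBall, ← bx_eq x hs']; exact fr_subset _ _ _ hy'
  linarith

def DoublingAt {N : ℕ} (μ : Measure (Fin N → ℝ)) (x : Fin N → ℝ) : Prop :=
  ∀ ρ > 0, ∃ r ∈ Set.Ioo (0:ℝ) ρ,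
    μ (closedBall x (2 * r)) ≤ 2 ^ (N + 1) * μ (closedBall x r)

lemma ae_doubling (μ : Measure (Fin N → ℝ)) [IsLocallyFiniteMeasure μ] :
    μ {x | ¬ DoublingAt μ x} = 0 := by
  classical
  set v := Besicovitch.vitaliFamily μ with hv
  set A : ℕ → ℕ → Set (Fin N → ℝ) := fun m n =>
    {x | ∀ r ∈ Set.Ioo (0:ℝ) (1/(m+1)),
      2 ^ (N + 1) * μ (closedBall x r) < μ (closedBall x (2 * r))} ∩ ball 0 (n+1) with hA
  have hsub : {x | ¬ DoublingAt μ x} ⊆ ⋃ m, ⋃ n, A m n := by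
    intro x hx
    simp only [DoublingAt, mem_setOf_eq, not_forall, not_exists, exists_prop] at hx
    obtain ⟨ρ, hρ, hρ'⟩ := hx
    obtain ⟨m, hm⟩ := exists_nat_one_div_lt hρ
    obtain ⟨n, hn⟩ := exists_nat_gt (‖x‖)
    refine mem_iUnion.2 ⟨m, mem_iUnion.2 ⟨n, ⟨?_, ?_⟩⟩⟩
    · intro r hr
      have hmem : r ∈ Set.Ioo (0:ℝ) ρ := ⟨hr.1, lt_trans hr.2 hm⟩
      have h := hρ' r
      rw [not_and] at h
      exact lt_of_not_ge (h hmem)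
    · simp only [mem_ball, dist_zero_right]
      calc ‖x‖ < n := hn
        _ ≤ n + 1 := by linarith
  refine measure_mono_null hsub (measure_iUnion_null fun m => measure_iUnion_null fun n => ?_)
  by_contra h0
  have hV : volume (ball (0 : Fin N → ℝ) ((n:ℝ)+1)) ≠ ∞ := measure_ball_lt_top.ne
  obtain ⟨c, hc, hcV⟩ : ∃ c : ℝ≥0, 0 < c ∧
      (c : ℝ≥0∞) * volume (ball (0 : Fin N → ℝ) ((n:ℝ)+1)) < μ (A m n) :=
    ENNReal.exists_nnreal_pos_mul_lt hV h0
  haveI : IsLocallyFiniteMeasure ((c : ℝ≥0∞) • (volume : Measure (Fin N → ℝ))) := by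
    constructor
    intro x
    obtain ⟨s, hs, h⟩ := (volume : Measure (Fin N → ℝ)).finiteAt_nhds x
    exact ⟨s, hs, by
      rw [Measure.smul_apply, smul_eq_mul]
      exact ENNReal.mul_lt_top ENNReal.coe_lt_top h⟩
  have key : μ (A m n) ≤ ((c : ℝ≥0∞) • volume) (A m n) := by
    apply v.measure_le_of_frequently_le ((c : ℝ≥0∞) • volume) Measure.AbsolutelyContinuous.rfl
    intro x hx
    have hbad := hx.1
    obtain ⟨o, ho, hofin⟩ := μ.finiteAt_nhds x
    obtain ⟨η, hη, hηo⟩ := Metric.mem_nhds_iff.1 ho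
    -- starting radius r0
    set r0 : ℝ := min (1/(2*((m:ℝ)+1))) (η/2) with hr0
    have hm1 : (0:ℝ) < (m:ℝ) + 1 := by positivity
    have hr0pos : 0 < r0 := lt_min (by positivity) (by positivity)
    have hr0small : r0 < 1/((m:ℝ)+1) := by
      calc r0 ≤ 1/(2*((m:ℝ)+1)) := min_le_left _ _
        _ < 1/((m:ℝ)+1) := by
          rw [div_lt_div_iff₀ (by positivity) hm1]; nlinarith
    have hMfin : μ (closedBall x r0) < ∞ := by
      refine lt_of_le_of_lt (measure_mono ?_) hofin
      refine subset_trans (closedBall_subset_ball ?_) hηo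
      calc r0 ≤ η/2 := min_le_right _ _
        _ < η := by linarith
    set M := μ (closedBall x r0) with hM
    -- the geometric decay
    have claim : ∀ k : ℕ, ((2:ℝ≥0∞) ^ (N+1)) ^ k * μ (closedBall x (r0 * (1/2)^k)) ≤ M := by
      intro k
      induction k with
      | zero => simp [hM]
      | succ k ih =>
        have hq : r0 * (1/2)^(k+1) ∈ Set.Ioo (0:ℝ) (1/((m:ℝ)+1)) := by
          constructor
          · positivity
          · have h1 : r0 * (1/2:ℝ)^(k+1) ≤ r0 * 1 :=
              mul_le_mul_of_nonneg_left (pow_le_one₀ (by norm_num) (by norm_num)) hr0pos.le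
            rw [mul_one] at h1
            exact lt_of_le_of_lt h1 hr0small
        have hstrict := hbad _ hq
        have h2q : 2 * (r0 * (1/2)^(k+1)) = r0 * (1/2)^k := by ring
        rw [h2q] at hstrict
        calc ((2:ℝ≥0∞) ^ (N+1)) ^ (k+1) * μ (closedBall x (r0 * (1/2)^(k+1)))
            = ((2:ℝ≥0∞) ^ (N+1)) ^ k * ((2:ℝ≥0∞) ^ (N+1) * μ (closedBall x (r0 * (1/2)^(k+1)))) := by
              ring
          _ ≤ ((2:ℝ≥0∞) ^ (N+1)) ^ k * μ (closedBall x (r0 * (1/2)^k)) :=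
              mul_le_mul_right hstrict.le _
          _ ≤ M := ih
    -- the volume of small closed balls
    have hvol : ∀ k : ℕ, volume (closedBall x (r0 * (1/2)^k)) =
        ((2:ℝ≥0∞)⁻¹ ^ k) ^ N * (ENNReal.ofReal (r0 ^ N) * volume (ball (0 : Fin N → ℝ) 1)) := by
      intro k
      have h12 : ENNReal.ofReal ((1/2:ℝ)) = 2⁻¹ := by
        rw [one_div, ENNReal.ofReal_inv_of_pos (by norm_num)]
        norm_num
      have hsplit : (r0 * (1/2:ℝ)^k)^N = ((1/2:ℝ)^k)^N * r0^N := by ring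
      rw [Measure.addHaar_closedBall volume x (by positivity), Module.finrank_fin_fun,
        hsplit, ENNReal.ofReal_mul (by positivity), ENNReal.ofReal_pow (by positivity),
        ENNReal.ofReal_pow (by norm_num), h12, mul_assoc]
    -- choose suitable small radii
    set v₁ := volume (ball (0 : Fin N → ℝ) 1) with hv₁
    have hv₁pos : v₁ ≠ 0 := (measure_ball_pos _ _ one_pos).ne'
    set W : ℝ≥0∞ := (c : ℝ≥0∞) * (ENNReal.ofReal (r0 ^ N) * v₁) with hW
    have hWpos : W ≠ 0 := by
      have h1 : (c : ℝ≥0∞) ≠ 0 := by simpa using hc.ne'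
      have h2 : ENNReal.ofReal (r0 ^ N) ≠ 0 := by
        rw [ne_eq, ENNReal.ofReal_eq_zero, not_le]
        positivity
      simp [hW, h1, h2, hv₁pos]
    obtain ⟨k0, hk0⟩ : ∃ k0 : ℕ, M ≤ W * 2 ^ k0 := by
      rcases eq_or_ne M 0 with h | h
      · exact ⟨0, by simp [h]⟩
      · obtain ⟨k0, hk0⟩ := ENNReal.exists_inv_two_pow_lt (ENNReal.div_pos hWpos hMfin.ne).ne'
        refine ⟨k0, ?_⟩
        have h1 : M * 2⁻¹ ^ k0 ≤ W := by
          calc M * 2⁻¹ ^ k0 ≤ M * (W / M) := mul_le_mul_right hk0.le _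
            _ = W := ENNReal.mul_div_cancel h hMfin.ne
        calc M = M * 2⁻¹ ^ k0 * 2 ^ k0 := by
              rw [mul_assoc, ← ENNReal.inv_pow, ENNReal.inv_mul_cancel (by positivity)
                (ENNReal.pow_ne_top (by norm_num)), mul_one]
          _ ≤ W * 2 ^ k0 := mul_le_mul_left h1 _
    rw [VitaliFamily.frequently_filterAt_iff]
    intro ε' hε'
    obtain ⟨k1, hk1⟩ : ∃ k1 : ℕ, r0 * (1/2:ℝ) ^ k1 ≤ ε' := by
      obtain ⟨k1, hk1⟩ := exists_pow_lt_of_lt_one (show (0:ℝ) < ε'/r0 by positivity)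
        (by norm_num : (1/2:ℝ) < 1)
      refine ⟨k1, ?_⟩
      rw [mul_comm]
      exact ((lt_div_iff₀ hr0pos).1 hk1).le
    set k := max k0 k1 with hk
    set rk := r0 * (1/2:ℝ) ^ k with hrk
    have hrkpos : 0 < rk := by positivity
    refine ⟨closedBall x rk, mem_image_of_mem _ hrkpos, ?_, ?_⟩
    · refine closedBall_subset_closedBall ?_
      calc rk ≤ r0 * (1/2:ℝ) ^ k1 := by
            refine mul_le_mul_of_nonneg_left ?_ hr0pos.le
            exact pow_le_pow_of_le_one (by norm_num) (by norm_num) (le_max_right _ _)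
        _ ≤ ε' := hk1
    · -- the measure estimate
      have h2ne0 : ((2:ℝ≥0∞) ^ (N+1)) ^ k ≠ 0 := by positivity
      have h2netop : ((2:ℝ≥0∞) ^ (N+1)) ^ k ≠ ∞ := by
        exact ENNReal.pow_ne_top (ENNReal.pow_ne_top (by norm_num))
      rw [Measure.smul_apply, smul_eq_mul, hvol k]
      rw [← ENNReal.mul_le_mul_iff_left h2ne0 h2netop]
      have hTa : (c : ℝ≥0∞) * (((2:ℝ≥0∞)⁻¹ ^ k) ^ N * (ENNReal.ofReal (r0 ^ N) * v₁)) *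
          ((2:ℝ≥0∞) ^ (N+1)) ^ k = W * 2 ^ k := by
        have e1 : ((2:ℝ≥0∞) ^ (N+1)) ^ k = 2 ^ (k*N) * 2 ^ k := by
          rw [← pow_mul, ← pow_add]
          congr 1
          ring
        have e2 : ((2:ℝ≥0∞)⁻¹ ^ k) ^ N = ((2:ℝ≥0∞) ^ (k*N))⁻¹ := by
          rw [← pow_mul, ENNReal.inv_pow]
        rw [e1, e2, hW]
        have cancel : ((2:ℝ≥0∞) ^ (k*N))⁻¹ * 2 ^ (k*N) = 1 :=
          ENNReal.inv_mul_cancel (by positivity) (ENNReal.pow_ne_top (by norm_num))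
        calc (c : ℝ≥0∞) * (((2:ℝ≥0∞) ^ (k*N))⁻¹ * (ENNReal.ofReal (r0 ^ N) * v₁)) *
              (2 ^ (k*N) * 2 ^ k)
            = (c : ℝ≥0∞) * (ENNReal.ofReal (r0 ^ N) * v₁) *
              (((2:ℝ≥0∞) ^ (k*N))⁻¹ * 2 ^ (k*N)) * 2 ^ k := by ring
          _ = (c : ℝ≥0∞) * (ENNReal.ofReal (r0 ^ N) * v₁) * 2 ^ k := by rw [cancel, mul_one]
      rw [hTa]
      calc μ (closedBall x rk) * ((2:ℝ≥0∞) ^ (N+1)) ^ k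
          = ((2:ℝ≥0∞) ^ (N+1)) ^ k * μ (closedBall x rk) := mul_comm _ _
        _ ≤ M := claim k
        _ ≤ W * 2 ^ k0 := hk0
        _ ≤ W * 2 ^ k := by
            refine mul_le_mul_right ?_ _
            exact pow_le_pow_right₀ one_le_two (le_max_left _ _)
  have hfin : μ (A m n) ≤ (c : ℝ≥0∞) * volume (ball (0 : Fin N → ℝ) ((n:ℝ)+1)) := by
    refine key.trans ?_
    rw [Measure.smul_apply, smul_eq_mul]
    exact mul_le_mul_right (measure_mono inter_subset_right) _
  exact absurd hfin (not_le.2 hcV)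

set_option maxHeartbeats 1000000 in
lemma good_radius {N : ℕ} (μ : Measure (Fin N → ℝ)) [IsLocallyFiniteMeasure μ] {ε : ℝ}
    (hε : 0 < ε) (x : Fin N → ℝ) (hx : DoublingAt μ x) {δ : ℝ} (hδ : 0 < δ) :
    ∃ r ∈ Set.Ioo (0:ℝ) δ,
      μ (Fr x r ε) ≤ ENNReal.ofReal (16 * N * 2 ^ N * ε) * μ (Bx x r) := by
  classical
  by_cases htriv : 1 ≤ 16 * (N:ℝ) * 2 ^ N * ε
  · refine ⟨δ/2, ⟨by positivity, by linarith⟩, ?_⟩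
    calc μ (Fr x (δ/2) ε) ≤ μ (Bx x (δ/2)) := measure_mono (fr_subset _ _ _)
      _ ≤ ENNReal.ofReal (16 * N * 2 ^ N * ε) * μ (Bx x (δ/2)) := by
          refine le_mul_of_one_le_left (zero_le) ?_
          rwa [ENNReal.one_le_ofReal]
  rcases Nat.eq_zero_or_pos N with hN | hN
  · subst hN
    refine ⟨δ/2, ⟨by positivity, by linarith⟩, ?_⟩
    have : Fr x (δ/2) ε = ∅ := by
      ext y
      simp [Fr]
    simp [this]
  -- main case
  push_neg at htriv
  have hN1 : (1:ℝ) ≤ N := by exact_mod_cast hN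
  have h2N : (2:ℝ) ≤ 2 ^ N := by
    calc (2:ℝ) = 2 ^ 1 := (pow_one 2).symm
      _ ≤ 2 ^ N := pow_le_pow_right₀ one_le_two hN
  have hprod : (2:ℝ) ≤ (N:ℝ) * 2 ^ N := by nlinarith
  have hε32 : ε < 1/32 := by
    by_contra hcon
    push_neg at hcon
    nlinarith [mul_le_mul hprod hcon (by norm_num : (0:ℝ) ≤ 1/32)
      (by positivity : (0:ℝ) ≤ (N:ℝ)*2^N)]
  -- get a finiteness radius
  obtain ⟨o, ho, hofin⟩ := μ.finiteAt_nhds x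
  obtain ⟨η, hη, hηo⟩ := Metric.mem_nhds_iff.1 ho
  obtain ⟨r, hr, hdbl⟩ := hx (min (δ/2) (η/2)) (by positivity)
  have hrpos : 0 < r := hr.1
  have hr2δ : 2 * r < δ := by
    have := hr.2
    have h1 : r < δ/2 := lt_of_lt_of_le this (min_le_left _ _)
    linarith
  have hfin2r : μ (closedBall x (2*r)) < ∞ := by
    refine lt_of_le_of_lt (measure_mono ?_) hofin
    refine subset_trans (closedBall_subset_ball ?_) hηo
    have h1 : r < η/2 := lt_of_lt_of_le hr.2 (min_le_right _ _)
    linarith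
  by_cases h0 : μ (closedBall x (2*r)) = 0
  · refine ⟨2*r, ⟨by positivity, hr2δ⟩, ?_⟩
    have hz : μ (Fr x (2*r) ε) = 0 := by
      refine le_antisymm ?_ (zero_le)
      calc μ (Fr x (2*r) ε) ≤ μ (Bx x (2*r)) := measure_mono (fr_subset _ _ _)
        _ = μ (closedBall x (2*r)) := by rw [bx_eq x (by positivity)]
        _ = 0 := h0
    simp [hz]
  -- now μ (closedBall x r) is positive and finite
  set m := μ (closedBall x r) with hm
  have hmfin : m < ∞ := lt_of_le_of_lt (measure_mono (closedBall_subset_closedBall (by linarith))) hfin2r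
  have hmpos : m ≠ 0 := by
    intro h
    rw [h, mul_zero] at hdbl
    exact h0 (le_antisymm hdbl (zero_le))
  set K : ℕ := ⌈1/(8*N*ε)⌉₊ with hK
  have hKge : 1/(8*(N:ℝ)*ε) ≤ K := Nat.le_ceil _
  have hKle : (K:ℝ) ≤ 1/(4*ε) := by
    have h1 : (K:ℝ) < 1/(8*N*ε) + 1 := Nat.ceil_lt_add_one (by positivity)
    have h2 : 1/(8*(N:ℝ)*ε) ≤ 1/(8*ε) := by
      rw [div_le_div_iff₀ (by positivity) (by positivity)]
      nlinarith
    have h3 : 1/(8*ε) + 1 ≤ 1/(4*ε) := by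
      rw [div_add' _ _ _ (by positivity), div_le_div_iff₀ (by positivity) (by positivity)]
      nlinarith
    linarith
  set u : ℕ → ℝ := fun j => 2*r*(1-ε)^(2*j) with hu
  have hudef : ∀ j, u j = 2*r*(1-ε)^(2*j) := fun j => by simp only [hu]
  have hεlt1 : ε < 1 := by linarith
  have hε1pos : (0:ℝ) < 1 - ε := by linarith
  have hupos : ∀ j, 0 < u j := fun j => by
    rw [hudef]
    positivity
  have hule : ∀ j, u j ≤ 2*r := fun j => by
    rw [hudef]
    have h1 : (1-ε)^(2*j) ≤ 1 := pow_le_one₀ (by linarith) (by linarith)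
    nlinarith
  have huge : ∀ j ≤ K, r ≤ u j := by
    intro j hj
    have h1 := one_add_mul_le_pow (show (-2:ℝ) ≤ -ε by linarith) (2*j)
    push_cast at h1
    have he : (1:ℝ) + -ε = 1 - ε := by ring
    rw [he] at h1
    have h2 : (j:ℝ) ≤ K := by exact_mod_cast hj
    have hKε : 2*(K:ℝ)*ε ≤ 1/2 := by
      have h5 : 2*(K:ℝ)*ε ≤ 2*(1/(4*ε))*ε := by nlinarith
      have h6 : 2*(1/(4*ε))*ε = 1/2 := by field_simp; ring
      linarith
    have h3 : (1:ℝ)/2 ≤ (1-ε)^(2*j) := by nlinarith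
    rw [hudef]
    nlinarith
  -- pairwise disjoint frames
  have hdisj : ∀ i j, i < j → Disjoint (Fr x (u i) ε) (Fr x (u j) ε) := by
    intro i j hij
    refine fr_disjoint (hupos j).le ?_
    have h1 : u j ≤ u (i+1) := by
      rw [hudef, hudef]
      refine mul_le_mul_of_nonneg_left ?_ (by positivity)
      exact pow_le_pow_of_le_one (by linarith) (by linarith) (by omega)
    have h2 : u (i+1) = u i * (1-ε)^2 := by
      rw [hudef, hudef, show 2*(i+1) = 2*i + 2 from by ring, pow_add]
      ring
    have h4 : u j ≤ u i * (1-ε)^2 := by rw [← h2]; exact h1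
    have h3 : u i * (1-ε)^2 < u i * (1-ε) := by
      have h5 := hupos i
      have hlt : (1-ε)^2 < (1-ε) := by nlinarith
      nlinarith
    calc u j ≤ u i * (1-ε)^2 := h4
      _ < u i * (1-ε) := h3
      _ = (1-ε) * u i := mul_comm _ _
  -- there is a good frame among j = 0,...,K
  have hgood : ∃ j ≤ K, μ (Fr x (u j) ε) ≤ ENNReal.ofReal (16 * N * 2 ^ N * ε) * μ (Bx x (u j)) := by
    by_contra hcon
    push_neg at hcon
    have hlow : ∀ j ∈ Finset.range (K+1),
        ENNReal.ofReal (16 * N * 2 ^ N * ε) * m ≤ μ (Fr x (u j) ε) := by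
      intro j hj
      rw [Finset.mem_range] at hj
      have h1 := hcon j (by omega)
      refine le_trans (mul_le_mul_right ?_ _) h1.le
      rw [hm, bx_eq x (hupos j).le]
      exact measure_mono (closedBall_subset_closedBall (huge j (by omega)))
    have hsum : ∑ j ∈ Finset.range (K+1), μ (Fr x (u j) ε) ≤ 2 ^ (N+1) * m := by
      rw [← measure_biUnion_finset ?hd fun j _ => (isClosed_fr x (u j) ε).measurableSet]
      case hd =>
        intro i hi j hj hij
        rcases lt_or_gt_of_ne hij with h | h
        · exact hdisj i j h
        · exact (hdisj j i h).symm
      refine le_trans (measure_mono ?_) hdbl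
      intro y hy
      simp only [Set.mem_iUnion] at hy
      obtain ⟨j, _, hyj⟩ := hy
      have := fr_subset _ _ _ hyj
      rw [bx_eq x (hupos j).le] at this
      exact closedBall_subset_closedBall (hule j) this
    have hlhs : (K+1 : ℝ≥0∞) * (ENNReal.ofReal (16 * N * 2 ^ N * ε) * m) ≤ 2 ^ (N+1) * m := by
      calc (K+1 : ℝ≥0∞) * (ENNReal.ofReal (16 * N * 2 ^ N * ε) * m)
          = ∑ _j ∈ Finset.range (K+1), ENNReal.ofReal (16 * N * 2 ^ N * ε) * m := by
            rw [Finset.sum_const, Finset.card_range, nsmul_eq_mul]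
            push_cast
            ring
        _ ≤ ∑ j ∈ Finset.range (K+1), μ (Fr x (u j) ε) := Finset.sum_le_sum hlow
        _ ≤ 2 ^ (N+1) * m := hsum
    rw [← mul_assoc, ENNReal.mul_le_mul_iff_left hmpos hmfin.ne] at hlhs
    -- transfer to the reals
    have hply : ((K:ℝ≥0∞)+1) * ENNReal.ofReal (16 * N * 2 ^ N * ε) =
        ENNReal.ofReal (((K:ℝ)+1) * (16 * N * 2 ^ N * ε)) := by
      rw [ENNReal.ofReal_mul (by positivity : (0:ℝ) ≤ (K:ℝ)+1),
        ENNReal.ofReal_add (by positivity) zero_le_one, ENNReal.ofReal_natCast,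
        ENNReal.ofReal_one]
    have h2N' : (2:ℝ≥0∞) ^ (N+1) = ENNReal.ofReal ((2:ℝ)^(N+1)) := by
      rw [ENNReal.ofReal_pow (by norm_num)]
      norm_num
    rw [hply, h2N', ENNReal.ofReal_le_ofReal_iff (by positivity)] at hlhs
    -- contradiction
    have hfinal : (2:ℝ)^(N+1) < ((K:ℝ)+1) * (16 * N * 2 ^ N * ε) := by
      have h1 : ((K:ℝ)+1) * (16 * N * 2 ^ N * ε) ≥ (1/(8*N*ε) + 1) * (16 * N * 2 ^ N * ε) := by
        have hc : (0:ℝ) < 16 * N * 2 ^ N * ε := by positivity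
        nlinarith
      have h2 : (1/(8*(N:ℝ)*ε)) * (16 * N * 2 ^ N * ε) = 2 * 2^N := by
        field_simp
        ring
      have h3 : (2:ℝ)^(N+1) = 2 * 2^N := by ring
      have hc : (0:ℝ) < 16 * N * 2 ^ N * ε := by positivity
      nlinarith
    linarith
  obtain ⟨j, hjK, hj⟩ := hgood
  exact ⟨u j, ⟨hupos j, lt_of_le_of_lt (hule j) hr2δ⟩, hj⟩

end Auxiliary

/-- Covering by good cubes: any open set `U` can be covered, up to a `μ`-null set, by
countably many pairwise disjoint closed cubes contained in `U`, of half-side at most `r₀`,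
each having frame of measure at most `16 N 2^N ε` times the measure of the cube. -/
theorem stmt_4 {N : ℕ} (μ : Measure (Fin N → ℝ)) [IsLocallyFiniteMeasure μ]
    (ε r₀ : ℝ) (hε : 0 < ε) (hr₀ : 0 < r₀)
    (U : Set (Fin N → ℝ)) (hU : IsOpen U) :
    ∃ J : Set ((Fin N → ℝ) × ℝ), J.Countable ∧
      (∀ p ∈ J, 0 < p.2 ∧ p.2 ≤ r₀ ∧ Bx p.1 p.2 ⊆ U ∧
        μ (Fr p.1 p.2 ε) ≤ ENNReal.ofReal (16 * N * 2 ^ N * ε) * μ (Bx p.1 p.2)) ∧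
      (J.Pairwise fun p q => Disjoint (Bx p.1 p.2) (Bx q.1 q.2)) ∧
      μ (U \ ⋃ p ∈ J, Bx p.1 p.2) = 0 := by
  classical
  have hA := ae_doubling μ
  set s : Set (Fin N → ℝ) := U \ {x | ¬ DoublingAt μ x} with hs
  set f : (Fin N → ℝ) → Set ℝ := fun x =>
    {r | 0 < r ∧ r ≤ r₀ ∧ closedBall x r ⊆ U ∧
      μ (Fr x r ε) ≤ ENNReal.ofReal (16 * N * 2 ^ N * ε) * μ (Bx x r)} with hf
  have hfx : ∀ x ∈ s, ∀ δ > 0, (f x ∩ Set.Ioo 0 δ).Nonempty := by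
    intro x hxs δ hδ
    have hxU : x ∈ U := hxs.1
    have hxD : DoublingAt μ x := not_not.1 hxs.2
    obtain ⟨R, hR, hRU⟩ := Metric.isOpen_iff.1 hU x hxU
    obtain ⟨r, hrI, hrb⟩ := good_radius μ hε x hxD
      (show 0 < min δ (min r₀ (R/2)) by positivity)
    have hrr₀ : r ≤ r₀ :=
      (lt_of_lt_of_le hrI.2 (le_trans (min_le_right _ _) (min_le_left _ _))).le
    have hrU : closedBall x r ⊆ U := by
      refine subset_trans (closedBall_subset_ball ?_) hRU
      have h1 : r < R/2 := lt_of_lt_of_le hrI.2 (le_trans (min_le_right _ _) (min_le_right _ _))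
      linarith
    exact ⟨r, ⟨hrI.1, hrr₀, hrU, hrb⟩, hrI.1, lt_of_lt_of_le hrI.2 (min_le_left _ _)⟩
  obtain ⟨t, rf, htc, hts, hrf, hnull, hdisj⟩ :=
    Besicovitch.exists_disjoint_closedBall_covering_ae μ f s hfx (fun _ => 1) (fun _ _ => one_pos)
  refine ⟨(fun x => (x, rf x)) '' t, htc.image _, ?_, ?_, ?_⟩
  · rintro p ⟨x, hxt, rfl⟩
    obtain ⟨⟨h1, h2, h3, h4⟩, _⟩ := hrf x hxt
    exact ⟨h1, h2, (bx_eq x h1.le) ▸ h3, h4⟩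
  · rintro p ⟨x, hxt, rfl⟩ q ⟨y, hyt, rfl⟩ hpq
    have hxy : x ≠ y := fun h => hpq (by rw [h])
    have := hdisj hxt hyt hxy
    simp only
    rw [bx_eq x (hrf x hxt).1.1.le, bx_eq y (hrf y hyt).1.1.le]
    exact this
  · have hBU : ⋃ p ∈ (fun x => (x, rf x)) '' t, Bx p.1 p.2
        = ⋃ x ∈ t, closedBall x (rf x) := by
      rw [Set.biUnion_image]
      exact Set.iUnion₂_congr fun x hx => bx_eq x (hrf x hx).1.1.le
    rw [hBU]
    have hsub : U \ ⋃ x ∈ t, closedBall x (rf x) ⊆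
        {x | ¬ DoublingAt μ x} ∪ (s \ ⋃ x ∈ t, closedBall x (rf x)) := by
      intro y hy
      by_cases h : DoublingAt μ y
      · exact Or.inr ⟨⟨hy.1, not_not_intro h⟩, hy.2⟩
      · exact Or.inl h
    exact measure_mono_null hsub (measure_union_null hA hnull)
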